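/- arXiv:1511.01320 — 2 statements merged into one kernel-verified Lean document; each statement's English description precedes it below -/
import Mathlib

section
/- The topological entropy of any self-induced minimal Cantor system is either 0 or +∞. -/
open Set

/-- Return time function `r_A(x) = inf {n > 0 : Tⁿ x ∈ A}`. -/
noncomputable def retTime {α : Type*} (T : α → α) (A : Set α) (x : α) : ℕ :=
  sInf {n : ℕ | 0 < n ∧ T^[n] x ∈ A}

/-- Minimality: every (two-sided) orbit is dense. -/
def IsMinimalHomeo {X : Type*} [TopologicalSpace X] (T : X ≃ₜ X) : Prop :=
  ∀ x : X, Dense {y : X | ∃ n : ℤ, (T.toEquiv ^ n) x = y}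

/-- A system is self-induced if it is conjugate to its first-return system on
some nonempty proper clopen subset. -/
def SelfInduced {X : Type*} [TopologicalSpace X] (T : X ≃ₜ X) : Prop :=
  ∃ U : Set X, IsClopen U ∧ U.Nonempty ∧ U ≠ Set.univ ∧
    ∃ φ : X → X, Continuous φ ∧ Function.Injective φ ∧ Set.range φ = U ∧
      ∀ x : X, φ (T x) = (⇑T)^[retTime (⇑T) U (φ x)] (φ x)


open Dynamics Uniformity UniformSpace
open scoped SetRel

noncomputable def sret {α : Type*} (T : α → α) (A : Set α) (x : α) : α :=
  T^[retTime T A x] x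

noncomputable def birk {α : Type*} (T : α → α) (A : Set α) (y : α) : ℕ → ℕ
  | 0 => 0
  | n+1 => retTime T A ((sret T A)^[n] y) + birk T A y n

section Hit

variable {X : Type*} [TopologicalSpace X] [CompactSpace X]

lemma equiv_zpow_natCast_apply (g : X ≃ X) (k : ℕ) (x : X) :
    (g ^ (k : ℤ)) x = (⇑g)^[k] x := by
  rw [zpow_natCast, Equiv.Perm.iterate_eq_pow]

lemma hit_core (g : X ≃ X) (hg : ∀ n : ℤ, Continuous ⇑(g ^ n))
    {O : Set X} (hO : IsOpen O) (hne : ∀ x : X, ∃ n : ℤ, (g ^ n) x ∈ O) :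
    ∃ Kc : ℕ, ∀ x : X, ∃ j : ℕ, j < Kc ∧ (⇑g)^[j] x ∈ O := by
  rcases isEmpty_or_nonempty X with hX | hX
  · exact ⟨1, fun x => (IsEmpty.false x).elim⟩
  obtain ⟨t, ht⟩ := IsCompact.elim_finite_subcover (isCompact_univ (X := X))
    (fun n : ℤ => ⇑(g ^ n) ⁻¹' O) (fun n => hO.preimage (hg n))
    (fun x _ => mem_iUnion.2 (hne x))
  have htne : t.Nonempty := by
    obtain ⟨x⟩ := hX
    have := ht (mem_univ x)
    simp only [mem_iUnion] at this
    obtain ⟨n, hn, -⟩ := this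
    exact ⟨n, hn⟩
  set a := t.min' htne with ha
  refine ⟨(t.max' htne - a).toNat + 1, fun x => ?_⟩
  have := ht (mem_univ ((g ^ (-a)) x))
  simp only [mem_iUnion] at this
  obtain ⟨n, hnt, hn⟩ := this
  have hna : a ≤ n := t.min'_le n hnt
  have hmem : (g ^ (n - a)) x ∈ O := by
    have heq : (g ^ n) ((g ^ (-a)) x) = (g ^ (n - a)) x := by
      rw [← Equiv.Perm.mul_apply, ← zpow_add, sub_eq_add_neg]
    simp only [mem_preimage] at hn
    rwa [heq] at hn
  refine ⟨(n - a).toNat, ?_, ?_⟩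
  · have h1 : n - a ≤ t.max' htne - a := by
      have := t.le_max' n hnt; omega
    have := Int.toNat_le_toNat h1
    omega
  · rw [← equiv_zpow_natCast_apply, Int.toNat_of_nonneg (by omega)]
    exact hmem

lemma homeo_zpow_continuous (T : X ≃ₜ X) : ∀ n : ℤ, Continuous ⇑(T.toEquiv ^ n) := by
  intro n
  cases n with
  | ofNat k =>
      have : ⇑(T.toEquiv ^ (k : ℤ)) = (⇑T)^[k] := by
        funext x; exact (equiv_zpow_natCast_apply T.toEquiv k x)
      rw [Int.ofNat_eq_coe, this]
      exact T.continuous.iterate k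
  | negSucc k =>
      have h1 : T.toEquiv ^ (Int.negSucc k) = (T.toEquiv⁻¹) ^ (k + 1) := by
        rw [zpow_negSucc, inv_pow]
      have h2 : ⇑((T.toEquiv⁻¹) ^ (k + 1)) = (⇑T.symm)^[k + 1] := by
        rw [← Equiv.Perm.iterate_eq_pow]; rfl
      rw [h1, h2]
      exact T.symm.continuous.iterate (k + 1)

/-- Every point enters any nonempty open set within a bounded number of forward iterates. -/
lemma hit_forward (T : X ≃ₜ X) (hmin : ∀ x : X, Dense {y : X | ∃ n : ℤ, (T.toEquiv ^ n) x = y})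
    {O : Set X} (hO : IsOpen O) (hOne : O.Nonempty) :
    ∃ Kc : ℕ, ∀ x : X, ∃ j : ℕ, j < Kc ∧ (⇑T)^[j] x ∈ O := by
  have h := hit_core T.toEquiv (homeo_zpow_continuous T) (O := O) hO (fun x => by
    obtain ⟨y, hy1, hy2⟩ := (hmin x).exists_mem_open hO hOne
    obtain ⟨n, hn⟩ := hy1
    exact ⟨n, hn ▸ hy2⟩)
  exact h

/-- Every point enters any nonempty open set within a bounded number of backward iterates. -/
lemma hit_backward (T : X ≃ₜ X) (hmin : ∀ x : X, Dense {y : X | ∃ n : ℤ, (T.toEquiv ^ n) x = y})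
    {O : Set X} (hO : IsOpen O) (hOne : O.Nonempty) :
    ∃ Kc : ℕ, ∀ x : X, ∃ j : ℕ, j < Kc ∧ (⇑T.symm)^[j] x ∈ O := by
  have h := hit_core (T.toEquiv⁻¹) (fun n => by
      have : (T.toEquiv⁻¹) ^ n = T.toEquiv ^ (-n) := by
        rw [inv_zpow, zpow_neg]
      rw [this]; exact homeo_zpow_continuous T (-n))
    (O := O) hO (fun x => by
      obtain ⟨y, hy1, hy2⟩ := (hmin x).exists_mem_open hO hOne
      obtain ⟨n, hn⟩ := hy1
      refine ⟨-n, ?_⟩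
      have : (T.toEquiv⁻¹) ^ (-n) = T.toEquiv ^ n := by
        rw [inv_zpow, ← zpow_neg, neg_neg]
      rw [this, hn]
      exact hy2)
  exact h

end Hit

section Ret
variable {α : Type*} {T : α → α} {A : Set α}

lemma retTime_spec {K1 : ℕ} (hK1 : ∀ x : α, ∃ j, j < K1 ∧ T^[j] x ∈ A) (y : α) :
    0 < retTime T A y ∧ retTime T A y ≤ K1 ∧ T^[retTime T A y] y ∈ A := by
  obtain ⟨j, hj, hjA⟩ := hK1 (T y)
  have hmem : (j+1) ∈ {n : ℕ | 0 < n ∧ T^[n] y ∈ A} :=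
    ⟨j.succ_pos, by rw [Function.iterate_succ_apply]; exact hjA⟩
  have hne : {n : ℕ | 0 < n ∧ T^[n] y ∈ A}.Nonempty := ⟨j+1, hmem⟩
  have h := Nat.sInf_mem hne
  exact ⟨h.1, le_trans (Nat.sInf_le hmem) hj, h.2⟩

lemma retTime_eq_of_pattern {y z : α} {N : ℕ}
    (hy : 0 < retTime T A y ∧ retTime T A y ≤ N ∧ T^[retTime T A y] y ∈ A)
    (hz : 0 < retTime T A z ∧ retTime T A z ≤ N ∧ T^[retTime T A z] z ∈ A)
    (hpat : ∀ j, j ≤ N → (T^[j] y ∈ A ↔ T^[j] z ∈ A)) :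
    retTime T A y = retTime T A z := by
  refine le_antisymm (Nat.sInf_le ⟨hz.1, ?_⟩) (Nat.sInf_le ⟨hy.1, ?_⟩)
  · exact (hpat _ hz.2.1).2 hz.2.2
  · exact (hpat _ hy.2.1).1 hy.2.2

lemma birk_iter (T : α → α) (A : Set α) (y : α) : ∀ n, T^[birk T A y n] y = (sret T A)^[n] y := by
  intro n
  induction n with
  | zero => simp [birk]
  | succ n ih =>
      rw [birk, Function.iterate_add_apply, ih, Function.iterate_succ_apply']
      rfl

lemma birk_lt (hpos : ∀ x : α, 0 < retTime T A x) (y : α) (n : ℕ) :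
    birk T A y n < birk T A y (n+1) := by
  have := hpos ((sret T A)^[n] y)
  simp only [birk]; omega

lemma birk_mono (hpos : ∀ x : α, 0 < retTime T A x) (y : α) : Monotone (birk T A y) :=
  monotone_nat_of_le_succ fun n => (birk_lt hpos y n).le

lemma birk_add_le (hpos : ∀ x : α, 0 < retTime T A x) (y : α) (n m : ℕ) :
    birk T A y n + m ≤ birk T A y (n + m) := by
  induction m with
  | zero => simp
  | succ m ih =>
      have h1 := birk_lt hpos y (n + m)
      have h2 : n + (m+1) = (n+m)+1 := rfl
      rw [h2]
      omega

lemma birk_interval (hpos : ∀ x : α, 0 < retTime T A x) (y : α) {t n : ℕ}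
    (ht : t < birk T A y n) : ∃ i, i < n ∧ birk T A y i ≤ t ∧ t < birk T A y (i+1) := by
  induction n with
  | zero => simp [birk] at ht
  | succ n ih =>
      by_cases h : t < birk T A y n
      · obtain ⟨i, hi, h1, h2⟩ := ih h
        exact ⟨i, by omega, h1, h2⟩
      · exact ⟨n, by omega, by omega, ht⟩

lemma iter_sret_mem (hmem : ∀ x : α, T^[retTime T A x] x ∈ A) {y : α} (hy : y ∈ A) :
    ∀ m, (sret T A)^[m] y ∈ A := by
  intro m
  cases m with
  | zero => exact hy
  | succ m => rw [Function.iterate_succ_apply']; exact hmem _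

lemma birk_lower (hpos : ∀ x : α, 0 < retTime T A x)
    (hmem : ∀ x : α, T^[retTime T A x] x ∈ A) {K : ℕ}
    (hK : ∀ x : α, ∃ j, j < K ∧ T^[j] x ∈ Aᶜ) {y : α} (hy : y ∈ A) (n : ℕ) :
    (n / K) * (K + 1) ≤ birk T A y n := by
  have step : ∀ m, birk T A y m + K + 1 ≤ birk T A y (m + K) := by
    intro m
    by_contra hcon
    push_neg at hcon
    have hge := birk_add_le hpos y m K
    have heq : birk T A y (m + K) = birk T A y m + K := by omega
    have hj_eq : ∀ j, j ≤ K → birk T A y (m + j) = birk T A y m + j := by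
      intro j hj
      have h1 := birk_add_le hpos y m j
      have h2 := birk_add_le hpos y (m + j) (K - j)
      rw [show m + j + (K - j) = m + K by omega, heq] at h2
      omega
    obtain ⟨j, hjK, hjc⟩ := hK (T^[birk T A y m] y)
    apply hjc
    have : T^[j] (T^[birk T A y m] y) = T^[birk T A y (m + j)] y := by
      rw [← Function.iterate_add_apply, hj_eq j hjK.le, Nat.add_comm (birk T A y m) j]
    rw [this, birk_iter]
    exact iter_sret_mem hmem hy (m + j)
  have hmul : ∀ m, m * (K + 1) ≤ birk T A y (m * K) := by
    intro m
    induction m with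
    | zero => simp [birk]
    | succ m ih =>
        have h1 := step (m * K)
        rw [show (m+1) * K = m * K + K by ring, show (m+1) * (K+1) = m * (K+1) + (K+1) by ring]
        omega
  calc (n / K) * (K + 1) ≤ birk T A y ((n / K) * K) := hmul (n / K)
    _ ≤ birk T A y n := birk_mono hpos y (Nat.div_mul_le_self n K)

lemma sync_lemma (T : α → α) (A : Set α) (W : Set (α × α)) {N : ℕ}
    (hret : ∀ y : α, 0 < retTime T A y ∧ retTime T A y ≤ N ∧ T^[retTime T A y] y ∈ A)
    {Z : Set (α × α)}
    (hZ : ∀ p ∈ Z, ∀ j, j ≤ N →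
      ((T^[j] p.1, T^[j] p.2) ∈ W ∧ (T^[j] p.1 ∈ A ↔ T^[j] p.2 ∈ A)))
    {n : ℕ} {y z : α} (hyz : ∀ i, i < n → ((sret T A)^[i] y, (sret T A)^[i] z) ∈ Z) :
    ∀ t, t < birk T A y n → (T^[t] y, T^[t] z) ∈ W := by
  have hpos : ∀ x : α, 0 < retTime T A x := fun x => (hret x).1
  have hr_eq : ∀ i, i < n →
      retTime T A ((sret T A)^[i] y) = retTime T A ((sret T A)^[i] z) := by
    intro i hi
    exact retTime_eq_of_pattern (hret _) (hret _) (fun j hj => (hZ _ (hyz i hi) j hj).2)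
  have hbirk_eq : ∀ i, i ≤ n → birk T A y i = birk T A z i := by
    intro i hi
    induction i with
    | zero => rfl
    | succ i ih =>
        rw [birk, birk, hr_eq i (by omega), ih (by omega)]
  intro t ht
  obtain ⟨i, hin, h1, h2⟩ := birk_interval hpos y ht
  set j := t - birk T A y i with hj
  have hjr : j < retTime T A ((sret T A)^[i] y) := by
    have := h2; rw [birk] at this; omega
  have hjN : j ≤ N := le_trans (Nat.le_of_lt_succ (Nat.lt_succ_of_lt hjr)) (hret _).2.1
  have hty : T^[t] y = T^[j] ((sret T A)^[i] y) := by
    rw [← birk_iter, ← Function.iterate_add_apply, show j + birk T A y i = t by omega]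
  have htz : T^[t] z = T^[j] ((sret T A)^[i] z) := by
    rw [← birk_iter, ← Function.iterate_add_apply,
      ← hbirk_eq i (by omega), show j + birk T A y i = t by omega]
  rw [hty, htz]
  exact (hZ _ (hyz i hin) j hjN).1

end Ret

section Covers
variable {X : Type*}

lemma coverMincard_univ_le_of_backward_cover (f g : X → X) (U : Set X) (W : Set (X × X))
    {K2 M : ℕ} (hginv : ∀ (j : ℕ) (x : X), f^[j] (g^[j] x) = x)
    (hcov : ∀ x : X, ∃ j, j < K2 ∧ g^[j] x ∈ U) :
    coverMincard f univ W M ≤ (K2 : ℕ∞) * coverMincard f U W (M + K2) := by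
  classical
  rcases isEmpty_or_nonempty X with hX | hX
  · have : (univ : Set X) = ∅ := by simp [eq_empty_of_isEmpty]
    rw [this, coverMincard_empty]
    exact zero_le
  rcases eq_top_or_lt_top (coverMincard f U W (M + K2)) with htop | hlt
  · rw [htop]
    have hK2 : (K2 : ℕ∞) ≠ 0 := by
      obtain ⟨x⟩ := hX
      obtain ⟨j, hj, -⟩ := hcov x
      simp only [ne_eq, Nat.cast_eq_zero]
      omega
    rw [ENat.mul_top hK2]
    exact le_top
  obtain ⟨s, s_cover, s_card⟩ := (coverMincard_finite_iff f U W (M + K2)).1 hlt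
  set tfin : Finset X := (Finset.range K2).biUnion (fun j => s.image (f^[j])) with htfin
  have t_cover : IsDynCoverOf f univ W M tfin := by
    intro x _
    obtain ⟨j, hj, hU⟩ := hcov x
    obtain ⟨y, hy, hball⟩ := s_cover hU
    refine ⟨f^[j] y, ?_, ?_⟩
    · simp only [htfin, Finset.coe_biUnion, Finset.coe_image, mem_iUnion, Finset.mem_coe,
        Finset.mem_range, mem_image]
      exact ⟨j, hj, y, hy, rfl⟩
    · rw [mem_dynEntourage] at hball ⊢
      intro k hk
      have h1 : f^[k] (f^[j] y) = f^[k + j] y := by rw [← Function.iterate_add_apply]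
      have h2 : f^[k + j] (g^[j] x) = f^[k] x := by
        rw [Function.iterate_add_apply, hginv]
      rw [h1, ← h2]
      exact hball (k + j) (by omega)
  have t_card : (tfin.card : ℕ∞) ≤ (K2 : ℕ∞) * (s.card : ℕ∞) := by
    have h1 : tfin.card ≤ K2 * s.card := by
      apply le_trans (Finset.card_biUnion_le)
      calc ∑ j ∈ Finset.range K2, (s.image (f^[j])).card
          ≤ ∑ _j ∈ Finset.range K2, s.card :=
            Finset.sum_le_sum (fun j _ => Finset.card_image_le)
        _ = K2 * s.card := by rw [Finset.sum_const, Finset.card_range, smul_eq_mul]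
    exact_mod_cast Nat.cast_le.2 h1
  calc coverMincard f univ W M ≤ (tfin.card : ℕ∞) := t_cover.coverMincard_le_card
    _ ≤ (K2 : ℕ∞) * (s.card : ℕ∞) := t_card
    _ = (K2 : ℕ∞) * coverMincard f U W (M + K2) := by rw [s_card]

lemma coverMincard_le_of_sync (f S : X → X) (U : Set X) {W Z V : Set (X × X)} {n L : ℕ}
    (hV_symm : SetRel.IsSymm V) (hVZ : V ○ V ⊆ Z)
    (hsync : ∀ y z : X, y ∈ U → (∀ i, i < n → (S^[i] y, S^[i] z) ∈ Z) →
      ∀ t, t < L → (f^[t] y, f^[t] z) ∈ W) :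
    coverMincard f U W L ≤ coverMincard S U V n := by
  classical
  rcases eq_top_or_lt_top (coverMincard S U V n) with htop | hlt
  · rw [htop]; exact le_top
  obtain ⟨s, s_cover, s_card⟩ := (coverMincard_finite_iff S U V n).1 hlt
  haveI := hV_symm
  obtain ⟨t, t_cover, t_card, t_inter⟩ := s_cover.nonempty_inter
  choose gg hgg using fun (x : X) (h : x ∈ t) => t_inter x h
  set t' : Finset X := t.attach.image (fun x => gg x.1 x.2) with ht'
  have t'_cover : IsDynCoverOf f U W L t' := by
    intro u hu
    obtain ⟨x, hx, hball⟩ := t_cover hu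
    have hgx := hgg x hx
    obtain ⟨hgx_ball, hgx_U⟩ := hgx
    refine ⟨gg x hx, ?_, ?_⟩
    · simp only [ht', Finset.coe_image, mem_image, Finset.mem_coe]
      exact ⟨⟨x, hx⟩, Finset.mem_attach _ _, rfl⟩
    · rw [mem_dynEntourage]
      intro k hk
      apply hsync u (gg x hx) hu _ k hk
      intro i hi
      apply hVZ
      refine ⟨S^[i] x, ?_, ?_⟩
      · rw [mem_dynEntourage] at hball
        exact hball i hi
      · rw [mem_ball_dynEntourage] at hgx_ball
        have := hgx_ball i hi
        rwa [ball, mem_preimage] at this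
  have t'_card : (t'.card : ℕ∞) ≤ (s.card : ℕ∞) := by
    have : t'.card ≤ t.card := le_trans Finset.card_image_le (by simp)
    exact_mod_cast Nat.cast_le.2 (le_trans this t_card)
  calc coverMincard f U W L ≤ (t'.card : ℕ∞) := t'_cover.coverMincard_le_card
    _ ≤ (s.card : ℕ∞) := t'_card
    _ = coverMincard S U V n := s_card

end Covers

open Filter ENNReal EReal in
theorem stmt6 {X : Type*} [MetricSpace X] [CompactSpace X]
    [TotallyDisconnectedSpace X] [PerfectSpace X]
    (T : X ≃ₜ X) (hmin : IsMinimalHomeo T) (hsi : SelfInduced T) :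
    Dynamics.coverEntropy (⇑T) Set.univ = 0 ∨ Dynamics.coverEntropy (⇑T) Set.univ = ⊤ := by
  classical
  obtain ⟨U, hUclopen, hUne, hUneq, φ, hφc, hφinj, hφrange, hφconj⟩ := hsi
  have hX : Nonempty X := ⟨hUne.choose⟩
  set f : X → X := ⇑T with hf
  -- basic constants
  obtain ⟨K1, hK1⟩ := hit_forward T hmin hUclopen.isOpen hUne
  have hret := retTime_spec (T := f) (A := U) hK1
  have hpos : ∀ x : X, 0 < retTime f U x := fun x => (hret x).1
  have hmem : ∀ x : X, f^[retTime f U x] x ∈ U := fun x => (hret x).2.2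
  have hUcne : (Uᶜ : Set X).Nonempty := nonempty_compl.2 hUneq
  obtain ⟨K, hK⟩ := hit_forward T hmin hUclopen.isClosed.isOpen_compl hUcne
  obtain ⟨K2, hK2⟩ := hit_backward T hmin hUclopen.isOpen hUne
  have hK_pos : 0 < K := by
    obtain ⟨x⟩ := hX; obtain ⟨j, hj, -⟩ := hK x; omega
  have hK2_pos : 0 < K2 := by
    obtain ⟨x⟩ := hX; obtain ⟨j, hj, -⟩ := hK2 x; omega
  have hginv : ∀ (j : ℕ) (x : X), f^[j] ((⇑T.symm)^[j] x) = x := by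
    intro j
    induction j with
    | zero => intro x; rfl
    | succ j ih =>
        intro x
        rw [Function.iterate_succ_apply (⇑T.symm) j x, Function.iterate_succ_apply' f j _,
          ih (T.symm x)]
        exact T.apply_symm_apply x
  -- conjugacy: the entropy of the return map on U equals the entropy of T
  have hcomap : UniformSpace.comap φ (inferInstance : UniformSpace X)
      = (inferInstance : UniformSpace X) := by
    apply unique_uniformity_of_compact ?_ rfl
    rw [UniformSpace.toTopologicalSpace_comap]
    exact ((hφc.isClosedEmbedding hφinj).toIsEmbedding).eq_induced.symm
  have hsemi : Function.Semiconj φ f (sret f U) := fun x => hφconj x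
  have hconj : coverEntropy (sret f U) U = coverEntropy f univ := by
    have h := coverEntropy_image_of_comap (inferInstance : UniformSpace X) hsemi univ
    rw [image_univ, hφrange, hcomap] at h
    exact h
  -- main dichotomy
  rcases eq_or_ne (coverEntropy f univ) ⊤ with htop | htop
  · exact Or.inr htop
  refine Or.inl ?_
  by_contra h0
  have h_nonneg : 0 ≤ coverEntropy f univ := coverEntropy_nonneg f univ_nonempty
  have hbot : coverEntropy f univ ≠ ⊥ := ne_of_gt (lt_of_lt_of_le bot_lt_zero h_nonneg)
  set hr : ℝ := (coverEntropy f univ).toReal with hhr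
  have hh : coverEntropy f univ = (hr : EReal) := (EReal.coe_toReal htop hbot).symm
  have hrpos : 0 < hr := by
    have h1 : 0 < coverEntropy f univ := lt_of_le_of_ne h_nonneg (Ne.symm h0)
    rw [hh] at h1
    exact_mod_cast h1
  -- real constants
  set Kr : ℝ := (K : ℝ) with hKr
  have hKr1 : 1 ≤ Kr := by rw [hKr]; exact_mod_cast hK_pos
  set ε : ℝ := hr / (8 * Kr + 8) with hε
  have hεpos : 0 < ε := by positivity
  have hεeq : ε * (8 * Kr + 8) = hr := by
    rw [hε]; field_simp
  set c : ℝ := hr - 2 * ε with hc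
  set c' : ℝ := hr + ε with hc'
  have hc_pos : 0 < c := by nlinarith
  have hc_lt : c < hr := by nlinarith
  have hc'_gt : hr < c' := by nlinarith
  have hgap : c' * Kr < c * (Kr + 1) := by nlinarith
  -- choice of entourages
  have hWex : ∃ W0 ∈ 𝓤 X, (c : EReal) < coverEntropyEntourage f univ W0 := by
    have h1 : (c : EReal) < coverEntropy f univ := by
      rw [hh]; exact_mod_cast hc_lt
    rw [coverEntropy] at h1
    obtain ⟨W0, hW0⟩ := lt_iSup_iff.1 h1
    obtain ⟨hW0uni, hW0lt⟩ := lt_iSup_iff.1 hW0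
    exact ⟨W0, hW0uni, hW0lt⟩
  obtain ⟨W0, hW0uni, hW0lt⟩ := hWex
  obtain ⟨W, hWuni, hWsymm, hWW⟩ := comp_symm_mem_uniformity_sets hW0uni
  have hWent : (c : EReal) < coverEntropyEntourage f univ (W ○ W) :=
    lt_of_lt_of_le hW0lt (coverEntropyEntourage_antitone f univ hWW)
  have hlog : ∀ M : ℕ, 0 < M → (M : EReal) * (c : EReal) < log (coverMincard f univ W M) := by
    intro M hM
    have h1 : coverEntropyEntourage f univ (W ○ W) ≤ log (coverMincard f univ W M) / (M : ℕ) :=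
      by haveI := hWsymm; exact coverEntropyEntourage_le_log_coverMincard_div (mapsTo_univ f univ) hM.ne'
    have h2 : (c : EReal) < log (coverMincard f univ W M) / (M : EReal) :=
      lt_of_lt_of_le hWent h1
    by_contra hcon
    push_neg at hcon
    have h3 : log (coverMincard f univ W M) / (M : EReal) ≤ (c : EReal) := by
      rw [EReal.div_le_iff_le_mul (by exact_mod_cast hM) (natCast_ne_top M)]
      calc log (coverMincard f univ W M) ≤ (M : EReal) * (c : EReal) := hcon
        _ = (M : EReal) * (c : EReal) := rfl
    exact absurd h2 (not_lt.2 h3)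
  -- the U-separating entourage
  have hEex : ∃ E ∈ 𝓤 X, ∀ p ∈ E, (p.1 ∈ U ↔ p.2 ∈ U) := by
    obtain ⟨E0, hE0, hdisj⟩ := (disjoint_compl_right (a := U)).exists_uniform_thickening
      hUclopen.isClosed.isCompact hUclopen.isOpen.isClosed_compl
    refine ⟨SetRel.symmetrize E0, symmetrize_mem_uniformity hE0, ?_⟩
    have hsub : SetRel.symmetrize E0 ⊆ E0 := SetRel.symmetrize_subset_self
    have key : ∀ p ∈ SetRel.symmetrize E0, p.1 ∈ U → p.2 ∈ U := by
      rintro ⟨a, b⟩ hp ha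
      by_contra hb
      have h1 : b ∈ ⋃ x ∈ U, ball x E0 := mem_iUnion₂.2 ⟨a, ha, hsub hp⟩
      have h2 : b ∈ ⋃ x ∈ (Uᶜ : Set X), ball x E0 :=
        mem_iUnion₂.2 ⟨b, hb, refl_mem_uniformity hE0⟩
      exact hdisj.le_bot ⟨h1, h2⟩
    rintro ⟨a, b⟩ hp
    constructor
    · exact key _ hp
    · intro hb
      exact key (b, a) (SetRel.symm (R := SetRel.symmetrize E0) hp) hb
  obtain ⟨E, hEuni, hEiff⟩ := hEex
  -- the pattern entourage
  set N : ℕ := K1 with hN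
  set Zent : Set (X × X) :=
    ⋂ j ∈ Finset.range (N + 1), (fun p : X × X => (f^[j] p.1, f^[j] p.2)) ⁻¹' (W ∩ E)
    with hZent
  have hZuni : Zent ∈ 𝓤 X := by
    rw [hZent]
    refine (Filter.biInter_finset_mem _).2 fun j _ => ?_
    have hUC : UniformContinuous f^[j] :=
      CompactSpace.uniformContinuous_of_continuous (T.continuous.iterate j)
    exact uniformContinuous_def.1 hUC _ (inter_mem hWuni hEuni)
  have hZprop : ∀ p ∈ Zent, ∀ j, j ≤ N →
      ((f^[j] p.1, f^[j] p.2) ∈ W ∧ (f^[j] p.1 ∈ U ↔ f^[j] p.2 ∈ U)) := by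
    intro p hp j hj
    rw [hZent, mem_iInter₂] at hp
    have := hp j (Finset.mem_range.2 (by omega))
    rw [mem_preimage] at this
    exact ⟨this.1, hEiff _ this.2⟩
  obtain ⟨V, hVuni, hVsymm, hVZ⟩ := comp_symm_mem_uniformity_sets hZuni
  -- the synchronization property
  have hsync : ∀ n : ℕ, ∀ y z : X, y ∈ U →
      (∀ i, i < n → ((sret f U)^[i] y, (sret f U)^[i] z) ∈ Zent) →
      ∀ t, t < (n / K) * (K + 1) → (f^[t] y, f^[t] z) ∈ W := by
    intro n y z hy hyz t ht
    refine sync_lemma f U W hret hZprop hyz t (lt_of_lt_of_le ht ?_)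
    exact birk_lower hpos hmem hK hy n
  -- the counting estimate
  have hcount : ∀ n : ℕ, K2 ≤ (n / K) * (K + 1) →
      coverMincard f univ W ((n / K) * (K + 1) - K2)
        ≤ (K2 : ℕ∞) * coverMincard (sret f U) U V n := by
    intro n hn
    have h1 : coverMincard f U W ((n / K) * (K + 1)) ≤ coverMincard (sret f U) U V n :=
      coverMincard_le_of_sync f (sret f U) U hVsymm hVZ (fun y z hy hyz => hsync n y z hy hyz)
    have h2 := coverMincard_univ_le_of_backward_cover f (⇑T.symm) U W
      (M := (n / K) * (K + 1) - K2) hginv hK2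
    rw [show (n / K) * (K + 1) - K2 + K2 = (n / K) * (K + 1) by omega] at h2
    exact le_trans h2 (mul_le_mul_right h1 _)
  -- the logarithm of K2
  set lk2 : EReal := log ((K2 : ℝ≥0∞)) with hlk2
  have hlk2_top : lk2 ≠ ⊤ := by
    rw [hlk2, ne_eq, log_eq_top_iff]
    exact ENNReal.natCast_ne_top K2
  have hlk2_bot : lk2 ≠ ⊥ := by
    rw [hlk2, ne_eq, log_eq_bot_iff]
    exact_mod_cast hK2_pos.ne'
  set rk2 : ℝ := lk2.toReal with hrk2
  have hlk2_eq : lk2 = (rk2 : EReal) := (EReal.coe_toReal hlk2_top hlk2_bot).symm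
  -- real constants for the eventual estimate
  set δ : ℝ := c * (Kr + 1) - c' * Kr with hδdef
  have hδpos : 0 < δ := by rw [hδdef]; linarith
  set B : ℝ := rk2 + c * (Kr + 1) + c * (K2 : ℝ) with hBdef
  -- the eventual estimate
  have hev : ∀ᶠ n : ℕ in atTop,
      (c' : EReal) ≤ log (coverMincard (sret f U) U V n) / (n : ℕ) := by
    refine eventually_atTop.2 ⟨K * (K2 + 1) + ⌈Kr * B / δ⌉₊ + 1, fun n hn => ?_⟩
    have hn1 : 1 ≤ n := by omega
    have hnK : K * (K2 + 1) ≤ n := by omega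
    have hdivK2 : K2 + 1 ≤ n / K := by
      rw [Nat.le_div_iff_mul_le hK_pos, Nat.mul_comm]
      omega
    set Ln : ℕ := (n / K) * (K + 1) with hLn
    have hK2Ln : K2 + 1 ≤ Ln := by
      calc K2 + 1 ≤ n / K := hdivK2
        _ ≤ (n / K) * (K + 1) := Nat.le_mul_of_pos_right _ (by omega)
    set Mn : ℕ := Ln - K2 with hMn
    have hMnpos : 0 < Mn := by omega
    have hMc := hlog Mn hMnpos
    have hcomp := hcount n (by omega)
    -- log chain
    set cmS := coverMincard (sret f U) U V n with hcmS
    have hchain : log (coverMincard f univ W Mn) ≤ lk2 + log (cmS : ℝ≥0∞) := by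
      have h1 : ((coverMincard f univ W Mn : ℕ∞) : ℝ≥0∞)
          ≤ (((K2 : ℕ∞) * cmS : ℕ∞) : ℝ≥0∞) := ENat.toENNReal_mono hcomp
      have h2 : (((K2 : ℕ∞) * cmS : ℕ∞) : ℝ≥0∞) = (K2 : ℝ≥0∞) * (cmS : ℝ≥0∞) := by
        rw [ENat.toENNReal_mul, ENat.toENNReal_coe]
      calc log (coverMincard f univ W Mn) ≤ log ((K2 : ℝ≥0∞) * (cmS : ℝ≥0∞)) := by
            rw [← h2]; exact log_monotone h1
        _ = lk2 + log (cmS : ℝ≥0∞) := by rw [log_mul_add, hlk2]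
    have hMc2 : (Mn : EReal) * (c : EReal) < lk2 + log (cmS : ℝ≥0∞) :=
      lt_of_lt_of_le hMc hchain
    -- reduce to a real inequality
    rw [EReal.le_div_iff_mul_le (by exact_mod_cast hn1) (natCast_ne_top n)]
    rcases eq_or_ne cmS ⊤ with hcmT | hcmT
    · rw [hcmT]
      simp only [ENat.toENNReal_top, log_top]
      exact le_top
    have hlog_top : log (cmS : ℝ≥0∞) ≠ ⊤ := by
      rw [ne_eq, log_eq_top_iff, ← ENat.toENNReal_top]
      exact fun hh2 => hcmT (ENat.toENNReal_inj.mp hh2)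
    have hcm1 : 1 ≤ cmS := (one_le_coverMincard_iff (sret f U) U V n).2 hUne
    have hcm0 : cmS ≠ 0 := by
      intro h; rw [h] at hcm1; exact absurd hcm1 (by norm_num)
    have hlog_bot : log (cmS : ℝ≥0∞) ≠ ⊥ := by
      rw [ne_eq, log_eq_bot_iff, ← ENat.toENNReal_zero]
      exact fun h => hcm0 (ENat.toENNReal_inj.1 h)
    set y : ℝ := (log (cmS : ℝ≥0∞)).toReal with hy
    have hy_eq : log (cmS : ℝ≥0∞) = (y : EReal) := (EReal.coe_toReal hlog_top hlog_bot).symm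
    -- extract the real inequality from hMc2
    have hreal1 : (Mn : ℝ) * c < rk2 + y := by
      have : ((Mn : ℝ) : EReal) * (c : EReal) < ((rk2 + y : ℝ) : EReal) := by
        rw [EReal.coe_coe_eq_natCast, EReal.coe_add, ← hy_eq, ← hlk2_eq]
        exact hMc2
      rw [← EReal.coe_mul] at this
      exact_mod_cast this
    -- the main real estimate
    have hq : (n : ℝ) - Kr + 1 ≤ Kr * ((n / K : ℕ) : ℝ) := by
      have h1 : K * (n / K) + n % K = n := Nat.div_add_mod n K
      have h2 : n % K < K := Nat.mod_lt n hK_pos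
      have hKn : K ≤ n := le_trans (Nat.le_mul_of_pos_right K (by omega : 0 < K2 + 1)) hnK
      have h3 : n - K + 1 ≤ K * (n / K) := by omega
      have hcast : ((n - K + 1 : ℕ) : ℝ) = (n : ℝ) - (K : ℝ) + 1 := by
        rw [Nat.cast_add, Nat.cast_sub hKn, Nat.cast_one]
      calc (n : ℝ) - Kr + 1 ≤ ((n - K + 1 : ℕ) : ℝ) := by rw [hcast, hKr]
        _ ≤ ((K * (n / K) : ℕ) : ℝ) := by exact_mod_cast h3
        _ = Kr * ((n / K : ℕ) : ℝ) := by rw [hKr]; push_cast; ring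
    have hnδ : Kr * B ≤ (n : ℝ) * δ := by
      have h1 : Kr * B / δ ≤ (⌈Kr * B / δ⌉₊ : ℝ) := Nat.le_ceil _
      have h2 : (⌈Kr * B / δ⌉₊ : ℝ) ≤ (n : ℝ) := by exact_mod_cast (by omega : ⌈Kr * B / δ⌉₊ ≤ n)
      rw [div_le_iff₀ hδpos] at h1
      calc Kr * B ≤ (⌈Kr * B / δ⌉₊ : ℝ) * δ := h1
        _ ≤ (n : ℝ) * δ := by
            apply mul_le_mul_of_nonneg_right h2 hδpos.le
    have hreal2 : c' * (n : ℝ) + rk2 ≤ c * ((Mn : ℝ)) := by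
      have hMnr : (Mn : ℝ) = ((n / K : ℕ) : ℝ) * (Kr + 1) - (K2 : ℝ) := by
        rw [hMn, Nat.cast_sub (by omega), hLn, hKr]; push_cast; ring
      set q : ℝ := ((n / K : ℕ) : ℝ) with hqdef
      have h1 : c * (Kr + 1) * ((n : ℝ) - Kr + 1) ≤ c * (Kr + 1) * (Kr * q) := by
        apply mul_le_mul_of_nonneg_left hq
        positivity
      have hKrpos : (0 : ℝ) < Kr := by linarith
      rw [hMnr]
      rw [← mul_le_mul_iff_right₀ hKrpos]
      nlinarith [h1, hnδ, hc_pos.le, hKr1, hδpos.le]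
    -- conclude
    have : ((c' * (n : ℝ) : ℝ) : EReal) ≤ (y : EReal) := by
      exact_mod_cast (by linarith : c' * (n : ℝ) ≤ y)
    rw [hy_eq]
    calc (c' : EReal) * (n : ℕ) = ((c' * (n : ℝ) : ℝ) : EReal) := by
          rw [EReal.coe_mul, EReal.coe_coe_eq_natCast]
      _ ≤ (y : EReal) := this
  -- conclusion
  have hlimsup : (c' : EReal) ≤ coverEntropyEntourage (sret f U) U V := by
    rw [coverEntropyEntourage]
    exact le_limsup_of_frequently_le hev.frequently
  have hfinal : (c' : EReal) ≤ coverEntropy f univ := by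
    rw [← hconj]
    exact le_trans hlimsup (coverEntropyEntourage_le_coverEntropy (sret f U) U hVuni)
  rw [hh] at hfinal
  have : c' ≤ hr := by exact_mod_cast hfinal
  linarith
end

section
/- Let (q_n) and (q'_n) be sequences of integers ≥ 2 with partial products p_n = q_1⋯q_n and p'_n = q'_1⋯q'_n. The odometers (ℤ_{(q'_n)}, R) and (ℤ_{(q_n)}, R) are topologically conjugate if and only if the groups of adic rationals ℚ_{(q'_n)} = {j/p'_n : j ∈ ℤ, n ≥ 1} and ℚ_{(q_n)} = {j/p_n : j ∈ ℤ, n ≥ 1} are equal as subgroups of ℚ. -/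
open Set

/-- Partial products `p_n = q_1 ⋯ q_n` (indexed from 0: `pp q n = q 0 * ⋯ * q n`). -/
def pp (q : ℕ → ℕ) (n : ℕ) : ℕ := ∏ i ∈ Finset.range (n + 1), q i

theorem pp_dvd (q : ℕ → ℕ) (n : ℕ) : pp q n ∣ pp q (n + 1) := by
  simp [pp, Finset.prod_range_succ]

instance (n : ℕ) : TopologicalSpace (ZMod n) := ⊥
instance (n : ℕ) : DiscreteTopology (ZMod n) := ⟨rfl⟩

/-- The `(q_n)`-adic integers: the inverse limit of the `ℤ/p_nℤ`. -/
abbrev Odo (q : ℕ → ℕ) : Type :=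
  {x : ∀ n, ZMod (pp q n) // ∀ n, ZMod.castHom (pp_dvd q n) (ZMod (pp q n)) (x (n + 1)) = x n}

/-- The odometer map: addition of `1`. -/
def odoR (q : ℕ → ℕ) : Odo q → Odo q :=
  fun x => ⟨fun n => x.1 n + 1, fun n => by rw [map_add, map_one, x.2 n]⟩

lemma pp_pos (q : ℕ → ℕ) (hq : ∀ n, 2 ≤ q n) (n : ℕ) : 0 < pp q n :=
  Finset.prod_pos fun i _ => lt_of_lt_of_le two_pos (hq i)

lemma pp_dvd_le (q : ℕ → ℕ) {a b : ℕ} (h : a ≤ b) : pp q a ∣ pp q b := by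
  induction b, h using Nat.le_induction with
  | base => exact dvd_rfl
  | succ b hb ih => exact ih.trans (pp_dvd q b)

lemma odo_cast_le (q : ℕ → ℕ) (x : Odo q) {a b : ℕ} (h : a ≤ b) :
    ZMod.castHom (pp_dvd_le q h) (ZMod (pp q a)) (x.1 b) = x.1 a := by
  induction b, h using Nat.le_induction with
  | base => simp
  | succ b hb ih =>
    rw [← ih, ← x.2 b, ← RingHom.comp_apply, ZMod.castHom_comp]

lemma odo_cast_eq (q : ℕ → ℕ) (x : Odo q) {k a b : ℕ} (h1 : k ∣ pp q a) (h2 : k ∣ pp q b) :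
    ZMod.castHom h1 (ZMod k) (x.1 a) = ZMod.castHom h2 (ZMod k) (x.1 b) := by
  wlog hab : a ≤ b generalizing a b
  · exact (this h2 h1 (le_of_not_ge hab)).symm
  rw [← odo_cast_le q x hab, ← RingHom.comp_apply, ZMod.castHom_comp]

lemma odoR_iterate (q : ℕ → ℕ) (x : Odo q) (j n : ℕ) :
    ((odoR q)^[j] x).1 n = x.1 n + (j : ZMod (pp q n)) := by
  induction j with
  | zero => simp
  | succ j ih =>
    rw [Function.iterate_succ_apply']
    show ((odoR q)^[j] x).1 n + 1 = _
    rw [ih]; push_cast; ring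

lemma f_iterate (q : ℕ → ℕ) {k : ℕ} (f : Odo q → ZMod k)
    (hcomm : ∀ x, f (odoR q x) = f x + 1) (j : ℕ) (x : Odo q) :
    f ((odoR q)^[j] x) = f x + (j : ZMod k) := by
  induction j with
  | zero => simp
  | succ j ih =>
    rw [Function.iterate_succ_apply', hcomm, ih]; push_cast; ring

lemma factor_dvd (q : ℕ → ℕ) {k : ℕ} (f : Odo q → ZMod k) (hf : Continuous f)
    (hcomm : ∀ x, f (odoR q x) = f x + 1) : ∃ m, k ∣ pp q m := by
  set x0 : Odo q := ⟨fun n => 0, fun n => map_zero _⟩ with hx0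
  have hopen : IsOpen (f ⁻¹' {f x0}) := (isOpen_discrete _).preimage hf
  obtain ⟨t, ht, hts⟩ := isOpen_induced_iff.mp hopen
  have hx0t : x0.1 ∈ t := by
    have : x0 ∈ f ⁻¹' {f x0} := rfl
    rw [← hts] at this; exact this
  obtain ⟨I, u, hu, hsub⟩ := isOpen_pi_iff.mp ht x0.1 hx0t
  set m := I.sup id with hm
  refine ⟨m, ?_⟩
  set y : Odo q := (odoR q)^[pp q m] x0 with hy
  have hyt : y.1 ∈ t := by
    apply hsub
    intro i hi
    have him : i ≤ m := Finset.le_sup (f := id) hi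
    have : y.1 i = x0.1 i := by
      rw [hy, odoR_iterate]
      have : ((pp q m : ℕ) : ZMod (pp q i)) = 0 :=
        (ZMod.natCast_eq_zero_iff _ _).mpr (pp_dvd_le q him)
      rw [this, add_zero]
    rw [this]
    exact (hu i hi).2
  have hfy : f y = f x0 := by
    have : y ∈ f ⁻¹' {f x0} := by rw [← hts]; exact hyt
    exact this
  rw [hy, f_iterate q f hcomm] at hfy
  rw [add_eq_left] at hfy
  exact (ZMod.natCast_eq_zero_iff _ _).mp hfy

noncomputable def buildMap (q q' : ℕ → ℕ) (d : ∀ n, ∃ m, pp q' n ∣ pp q m) :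
    Odo q → Odo q' :=
  fun x => ⟨fun n => ZMod.castHom (d n).choose_spec (ZMod (pp q' n)) (x.1 (d n).choose),
    fun n => by
      rw [← RingHom.comp_apply, ZMod.castHom_comp]
      exact odo_cast_eq q x _ _⟩

lemma buildMap_continuous (q q' : ℕ → ℕ) (d : ∀ n, ∃ m, pp q' n ∣ pp q m) :
    Continuous (buildMap q q' d) := by
  apply Continuous.subtype_mk
  exact continuous_pi fun n =>
    continuous_of_discreteTopology.comp ((continuous_apply _).comp continuous_subtype_val)

lemma buildMap_comm (q q' : ℕ → ℕ) (d : ∀ n, ∃ m, pp q' n ∣ pp q m) (x : Odo q) :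
    buildMap q q' d (odoR q x) = odoR q' (buildMap q q' d x) := by
  apply Subtype.ext; funext n
  show ZMod.castHom _ _ (x.1 _ + 1) = ZMod.castHom _ _ (x.1 _) + 1
  rw [map_add, map_one]

lemma buildMap_inv (q q' : ℕ → ℕ) (d : ∀ n, ∃ m, pp q' n ∣ pp q m)
    (d' : ∀ n, ∃ m, pp q n ∣ pp q' m) (x : Odo q) :
    buildMap q' q d' (buildMap q q' d x) = x := by
  apply Subtype.ext; funext n
  show ZMod.castHom _ _ (ZMod.castHom _ _ (x.1 _)) = x.1 n
  rw [← RingHom.comp_apply, ZMod.castHom_comp,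
    odo_cast_eq q x _ (dvd_refl (pp q n)), ZMod.castHom_apply, ZMod.cast_id]

lemma subset_of_dvd (q q' : ℕ → ℕ) (hq : ∀ n, 2 ≤ q n) (hq' : ∀ n, 2 ≤ q' n)
    (d : ∀ n, ∃ m, pp q n ∣ pp q' m) :
    {r : ℚ | ∃ (j : ℤ) (n : ℕ), r = (j : ℚ) / (pp q n : ℚ)} ⊆
      {r : ℚ | ∃ (j : ℤ) (n : ℕ), r = (j : ℚ) / (pp q' n : ℚ)} := by
  rintro r ⟨j, n, rfl⟩
  obtain ⟨m, c, hc⟩ := d n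
  refine ⟨j * c, m, ?_⟩
  have h1 : (pp q n : ℚ) ≠ 0 := Nat.cast_ne_zero.mpr (pp_pos q hq n).ne'
  have h2 : (pp q' m : ℚ) ≠ 0 := Nat.cast_ne_zero.mpr (pp_pos q' hq' m).ne'
  have hc' : (pp q' m : ℚ) = (pp q n : ℚ) * c := by exact_mod_cast congrArg (Nat.cast : ℕ → ℚ) hc
  have hc0 : (c : ℚ) ≠ 0 := by
    intro h0
    rw [h0, mul_zero] at hc'
    exact h2 hc'
  field_simp [hc', hc0]
  rw [hc']; push_cast; ring

lemma dvd_of_subset (q q' : ℕ → ℕ) (hq : ∀ n, 2 ≤ q n) (hq' : ∀ n, 2 ≤ q' n)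
    (hsub : {r : ℚ | ∃ (j : ℤ) (n : ℕ), r = (j : ℚ) / (pp q n : ℚ)} ⊆
      {r : ℚ | ∃ (j : ℤ) (n : ℕ), r = (j : ℚ) / (pp q' n : ℚ)}) (n : ℕ) :
    ∃ m, pp q n ∣ pp q' m := by
  have h1 : ((1 : ℚ) / (pp q n : ℚ)) ∈
      {r : ℚ | ∃ (j : ℤ) (n : ℕ), r = (j : ℚ) / (pp q n : ℚ)} := ⟨1, n, by norm_num⟩
  obtain ⟨j, m, hjm⟩ := hsub h1
  have hqn : (pp q n : ℚ) ≠ 0 := Nat.cast_ne_zero.mpr (pp_pos q hq n).ne'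
  have hqm : (pp q' m : ℚ) ≠ 0 := Nat.cast_ne_zero.mpr (pp_pos q' hq' m).ne'
  have key : (pp q' m : ℚ) = (j : ℚ) * (pp q n : ℚ) := by
    field_simp at hjm
    linarith [hjm]
  have keyZ : (pp q' m : ℤ) = j * (pp q n : ℤ) := by exact_mod_cast key
  exact ⟨m, Int.natCast_dvd_natCast.mp ⟨j, by rw [keyZ]; ring⟩⟩

theorem stmt9 (q q' : ℕ → ℕ) (hq : ∀ n, 2 ≤ q n) (hq' : ∀ n, 2 ≤ q' n) :
    (∃ h : Odo q ≃ₜ Odo q', ∀ x : Odo q, h (odoR q x) = odoR q' (h x)) ↔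
    ({r : ℚ | ∃ (j : ℤ) (n : ℕ), r = (j : ℚ) / (pp q n : ℚ)} =
      {r : ℚ | ∃ (j : ℤ) (n : ℕ), r = (j : ℚ) / (pp q' n : ℚ)}) := by
  constructor
  · rintro ⟨h, hcomm⟩
    have hsymm : ∀ y, h.symm (odoR q' y) = odoR q (h.symm y) := by
      intro y
      have : odoR q' y = h (odoR q (h.symm y)) := by rw [hcomm, h.apply_symm_apply]
      rw [this, h.symm_apply_apply]
    have d1 : ∀ n, ∃ m, pp q n ∣ pp q' m := by
      intro n
      exact factor_dvd q' (fun y => (h.symm y).1 n)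
        ((continuous_apply n).comp (continuous_subtype_val.comp h.symm.continuous))
        (fun y => by show ((h.symm (odoR q' y)).1 n) = _; rw [hsymm y]; rfl)
    have d2 : ∀ n, ∃ m, pp q' n ∣ pp q m := by
      intro n
      exact factor_dvd q (fun x => (h x).1 n)
        ((continuous_apply n).comp (continuous_subtype_val.comp h.continuous))
        (fun x => by show ((h (odoR q x)).1 n) = _; rw [hcomm x]; rfl)
    exact Set.Subset.antisymm (subset_of_dvd q q' hq hq' d1) (subset_of_dvd q' q hq' hq d2)
  · intro hset
    have d : ∀ n, ∃ m, pp q' n ∣ pp q m := dvd_of_subset q' q hq' hq hset.symm.subset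
    have d' : ∀ n, ∃ m, pp q n ∣ pp q' m := dvd_of_subset q q' hq hq' hset.subset
    refine ⟨Homeomorph.mk (Equiv.mk (buildMap q q' d) (buildMap q' q d')
      (buildMap_inv q q' d d') (buildMap_inv q' q d' d))
      (buildMap_continuous q q' d) (buildMap_continuous q' q d'), buildMap_comm q q' d⟩
end
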